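/- Let β₁, β₂ > 1 be two different non-integers with ν_{β₁} = ν_{β₂}. Then the orbits O_{β₁} = {T_{β₁}^n(1) : n ≥ 1} and O_{β₂} = {T_{β₂}^n(1) : n ≥ 1} are both finite sets, and O_{β₁} \ {0} = O_{β₂} \ {0}. -/

import Mathlib

open MeasureTheory Filter Set

/-- The orbit of `1` under the β-transformation: `betaOrb β 0 = 1`,
`betaOrb β (n+1) = β * betaOrb β n (mod 1)`. -/
noncomputable def betaOrb (β : ℝ) : ℕ → ℝ
  | 0 => 1
  | n + 1 => Int.fract (β * betaOrb β n)

/-- The unnormalized density `h_β(x) = Σ_{n ≥ 0, T_β^n(1) > x} β^{-n}`. -/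
noncomputable def hBeta (β : ℝ) (x : ℝ) : ℝ :=
  ∑' n : ℕ, if x < betaOrb β n then (β ^ n)⁻¹ else 0

/-- The normalization constant `K_β = Σ_{n ≥ 0} T_β^n(1) / β^n`. -/
noncomputable def KBeta (β : ℝ) : ℝ :=
  ∑' n : ℕ, betaOrb β n / β ^ n

/-- The Rényi–Parry measure: density `h_β / K_β` w.r.t. Lebesgue measure on `[0,1)`. -/
noncomputable def nuBeta (β : ℝ) : Measure ℝ :=
  (volume.restrict (Set.Ico (0 : ℝ) 1)).withDensity
    (fun x => ENNReal.ofReal (hBeta β x / KBeta β))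

/-- The left-limit function of `hBeta`. -/
noncomputable def hLeft (β : ℝ) (y : ℝ) : ℝ :=
  ∑' n : ℕ, if y ≤ betaOrb β n then (β ^ n)⁻¹ else 0

/-- The jump of `hBeta` at `y`. -/
noncomputable def jump (β : ℝ) (y : ℝ) : ℝ :=
  ∑' n : ℕ, if betaOrb β n = y then (β ^ n)⁻¹ else 0

section aux
variable {β : ℝ} (hβ : 1 < β)

lemma orb_nonneg (n : ℕ) : 0 ≤ betaOrb β n := by
  cases n with
  | zero => norm_num [betaOrb]
  | succ n => exact (Int.fract_nonneg _)

lemma orb_le_one (n : ℕ) : betaOrb β n ≤ 1 := by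
  cases n with
  | zero => norm_num [betaOrb]
  | succ n => exact (Int.fract_lt_one _).le

lemma orb_lt_one {n : ℕ} (hn : 1 ≤ n) : betaOrb β n < 1 := by
  cases n with
  | zero => omega
  | succ n => exact Int.fract_lt_one _

include hβ

lemma summable_geom : Summable (fun n : ℕ => (β ^ n)⁻¹) := by
  have h0 : (0:ℝ) < β := lt_trans one_pos hβ
  have := summable_geometric_of_lt_one (r := β⁻¹) (by positivity)
    (inv_lt_one_of_one_lt₀ hβ)
  simpa [inv_pow] using this

lemma summable_ite (p : ℕ → Prop) [DecidablePred p] :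
    Summable (fun n : ℕ => if p n then (β ^ n)⁻¹ else 0) := by
  refine Summable.of_nonneg_of_le (fun n => ?_) (fun n => ?_) (summable_geom hβ)
  · split <;> positivity
  · split
    · exact le_rfl
    · positivity

lemma hBeta_nonneg (x : ℝ) : 0 ≤ hBeta β x := by
  refine tsum_nonneg fun n => ?_
  split <;> positivity

lemma hBeta_anti : Antitone (hBeta β) := by
  intro x y hxy
  refine Summable.tsum_le_tsum (fun n => ?_) (summable_ite hβ _) (summable_ite hβ _)
  by_cases h : y < betaOrb β n
  · rw [if_pos h, if_pos (lt_of_le_of_lt hxy h)]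
  · rw [if_neg h]
    split <;> positivity

lemma KBeta_summable : Summable (fun n : ℕ => betaOrb β n / β ^ n) := by
  refine Summable.of_nonneg_of_le (fun n => ?_) (fun n => ?_) (summable_geom hβ)
  · have := orb_nonneg (β := β) n; positivity
  · rw [div_eq_mul_inv]
    have h1 : (0:ℝ) ≤ (β ^ n)⁻¹ := by positivity
    nlinarith [orb_le_one (β := β) n]

lemma one_le_KBeta : 1 ≤ KBeta β := by
  have := Summable.le_tsum (KBeta_summable hβ) 0 (fun i _ => by
    have := orb_nonneg (β := β) i; positivity)
  simpa [KBeta, betaOrb] using this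

lemma KBeta_pos : 0 < KBeta β := lt_of_lt_of_le one_pos (one_le_KBeta hβ)

lemma tendsto_hBeta_right {x : ℝ} {u : ℕ → ℝ} (hu : ∀ k, x < u k)
    (hlim : Tendsto u atTop (nhds x)) :
    Tendsto (fun k => hBeta β (u k)) atTop (nhds (hBeta β x)) := by
  refine tendsto_tsum_of_dominated_convergence (summable_geom hβ) (fun n => ?_) ?_
  · by_cases h : x < betaOrb β n
    · have : ∀ᶠ k in atTop, (if u k < betaOrb β n then (β ^ n)⁻¹ else 0) = (β ^ n)⁻¹ := by
        filter_upwards [hlim.eventually_lt_const h] with k hk using if_pos hk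
      rw [if_pos h]
      exact Tendsto.congr' (this.mono fun k hk => hk.symm) tendsto_const_nhds
    · have : ∀ k, (if u k < betaOrb β n then (β ^ n)⁻¹ else 0) = 0 := fun k => by
        rw [if_neg (not_lt.2 (le_trans (not_lt.1 h) (hu k).le))]
      rw [if_neg h]
      simp only [this]
      exact tendsto_const_nhds
  · refine Eventually.of_forall fun k => fun n => ?_
    rw [Real.norm_eq_abs, abs_of_nonneg (by split <;> positivity)]
    split
    · exact le_rfl
    · positivity

lemma tendsto_hBeta_left {y : ℝ} {u : ℕ → ℝ} (hu : ∀ k, u k < y)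
    (hlim : Tendsto u atTop (nhds y)) :
    Tendsto (fun k => hBeta β (u k)) atTop (nhds (hLeft β y)) := by
  refine tendsto_tsum_of_dominated_convergence (summable_geom hβ) (fun n => ?_) ?_
  · by_cases h : y ≤ betaOrb β n
    · have : ∀ k, (if u k < betaOrb β n then (β ^ n)⁻¹ else 0) = (β ^ n)⁻¹ := fun k =>
        if_pos (lt_of_lt_of_le (hu k) h)
      rw [if_pos h]
      simp only [this]
      exact tendsto_const_nhds
    · have : ∀ᶠ k in atTop, (if u k < betaOrb β n then (β ^ n)⁻¹ else 0) = 0 := by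
        filter_upwards [hlim.eventually_const_lt (not_le.1 h)] with k hk using
          if_neg (not_lt.2 hk.le)
      rw [if_neg h]
      exact Tendsto.congr' (this.mono fun k hk => hk.symm) tendsto_const_nhds
  · refine Eventually.of_forall fun k => fun n => ?_
    rw [Real.norm_eq_abs, abs_of_nonneg (by split <;> positivity)]
    split
    · exact le_rfl
    · positivity

lemma hLeft_sub_hBeta (y : ℝ) : hLeft β y - hBeta β y = jump β y := by
  rw [hLeft, hBeta, ← Summable.tsum_sub (summable_ite hβ _) (summable_ite hβ _)]
  refine tsum_congr fun n => ?_
  rcases lt_trichotomy y (betaOrb β n) with h | h | h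
  · rw [if_pos h.le, if_pos h, if_neg (by linarith), sub_self]
  · rw [if_pos h.le, if_neg (by simp [h]), if_pos h.symm, sub_zero]
  · rw [if_neg (by linarith), if_neg (by linarith), if_neg (by linarith), sub_self]

lemma jump_nonneg (y : ℝ) : 0 ≤ jump β y :=
  tsum_nonneg fun n => by split <;> positivity

lemma le_jump {y : ℝ} {n : ℕ} (h : betaOrb β n = y) : (β ^ n)⁻¹ ≤ jump β y := by
  have := Summable.le_tsum (summable_ite hβ (fun n => betaOrb β n = y)) n
    (fun i _ => by split <;> positivity)
  rwa [if_pos h] at this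

lemma jump_pos_iff {y : ℝ} : 0 < jump β y ↔ ∃ n, betaOrb β n = y := by
  constructor
  · intro h
    by_contra hc
    push_neg at hc
    rw [jump, tsum_congr (fun n => if_neg (hc n)), tsum_zero] at h
    exact lt_irrefl _ h
  · rintro ⟨n, hn⟩
    exact lt_of_lt_of_le (by positivity) (le_jump hβ hn)

end aux

lemma orb_finite_of_not_injective {β : ℝ} (h : ¬ Function.Injective (betaOrb β)) :
    {x : ℝ | ∃ n : ℕ, 1 ≤ n ∧ betaOrb β n = x}.Finite := by
  simp only [Function.Injective, not_forall] at h
  obtain ⟨a, b, hab, hne⟩ := h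
  wlog hlt : a < b generalizing a b
  · exact this b a hab.symm (Ne.symm hne) (by omega)
  set p := b - a with hp
  have hper : ∀ k : ℕ, betaOrb β (a + k + p) = betaOrb β (a + k) := by
    intro k
    induction k with
    | zero => simpa [hp, Nat.add_sub_cancel' hlt.le] using hab.symm
    | succ k ih =>
      have h1 : a + (k+1) + p = (a + k + p) + 1 := by omega
      have h2 : a + (k+1) = (a + k) + 1 := by omega
      rw [h1, h2]
      simp only [betaOrb, ih]
  have hper' : ∀ n, a ≤ n → betaOrb β (n + p) = betaOrb β n := by
    intro n hn
    have := hper (n - a)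
    rwa [Nat.add_sub_cancel' hn] at this
  have hrange : ∀ n : ℕ, ∃ m, m < b ∧ betaOrb β m = betaOrb β n := by
    intro n
    induction n using Nat.strong_induction_on with
    | _ n ih =>
      by_cases hnb : n < b
      · exact ⟨n, hnb, rfl⟩
      · push_neg at hnb
        obtain ⟨m, hm, hm2⟩ := ih (n - p) (by omega)
        refine ⟨m, hm, ?_⟩
        rw [hm2, ← hper' (n - p) (by omega), Nat.sub_add_cancel (by omega)]
  have hsub : {x : ℝ | ∃ n : ℕ, 1 ≤ n ∧ betaOrb β n = x} ⊆ betaOrb β '' (Set.Iio b) := by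
    rintro x ⟨n, _, rfl⟩
    obtain ⟨m, hm, hm2⟩ := hrange n
    exact ⟨m, hm, hm2⟩
  exact Set.Finite.subset ((Set.finite_Iio b).image _) hsub

lemma orb_injective_of_infinite {β : ℝ}
    (h : {x : ℝ | ∃ n : ℕ, 1 ≤ n ∧ betaOrb β n = x}.Infinite) :
    Function.Injective (betaOrb β) := by
  by_contra hc
  exact h (orb_finite_of_not_injective hc)

lemma orb_ne_zero_of_injective {β : ℝ} (h : Function.Injective (betaOrb β)) (n : ℕ) :
    betaOrb β n ≠ 0 := by
  intro h0
  have : betaOrb β (n + 1) = betaOrb β n := by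
    simp [betaOrb, h0]
  exact Nat.succ_ne_self n (h this)

theorem stmt_11 (β₁ β₂ : ℝ) (hβ₁ : 1 < β₁) (hβ₂ : 1 < β₂) (hne : β₁ ≠ β₂)
    (hni₁ : ¬ ∃ k : ℤ, β₁ = k) (hni₂ : ¬ ∃ k : ℤ, β₂ = k)
    (hν : nuBeta β₁ = nuBeta β₂) :
    {x : ℝ | ∃ n : ℕ, 1 ≤ n ∧ betaOrb β₁ n = x}.Finite ∧
    {x : ℝ | ∃ n : ℕ, 1 ≤ n ∧ betaOrb β₂ n = x}.Finite ∧
    {x : ℝ | ∃ n : ℕ, 1 ≤ n ∧ betaOrb β₁ n = x} \ {0} =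
      {x : ℝ | ∃ n : ℕ, 1 ≤ n ∧ betaOrb β₂ n = x} \ {0} := by
  have hK₁ : 0 < KBeta β₁ := KBeta_pos hβ₁
  have hK₂ : 0 < KBeta β₂ := KBeta_pos hβ₂
  -- Step 1: a.e. equality of densities
  have hm₁ : Measurable (fun x => ENNReal.ofReal (hBeta β₁ x / KBeta β₁)) :=
    (((hBeta_anti hβ₁).measurable).div_const _).ennreal_ofReal
  have hm₂ : Measurable (fun x => ENNReal.ofReal (hBeta β₂ x / KBeta β₂)) :=
    (((hBeta_anti hβ₂).measurable).div_const _).ennreal_ofReal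
  have hν' : (volume.restrict (Set.Ico (0 : ℝ) 1)).withDensity
      (fun x => ENNReal.ofReal (hBeta β₁ x / KBeta β₁)) =
      (volume.restrict (Set.Ico (0 : ℝ) 1)).withDensity
      (fun x => ENNReal.ofReal (hBeta β₂ x / KBeta β₂)) := hν
  have hae := (withDensity_eq_iff_of_sigmaFinite hm₁.aemeasurable hm₂.aemeasurable).mp hν'
  have hae2 : ∀ᵐ x ∂(volume : Measure ℝ), x ∈ Set.Ico (0:ℝ) 1 →
      hBeta β₁ x / KBeta β₁ = hBeta β₂ x / KBeta β₂ := by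
    have := (ae_restrict_iff' measurableSet_Ico).mp hae
    filter_upwards [this] with x hx hx'
    exact (ENNReal.ofReal_eq_ofReal_iff (div_nonneg (hBeta_nonneg hβ₁ x) hK₁.le)
      (div_nonneg (hBeta_nonneg hβ₂ x) hK₂.le)).mp (hx hx')
  have hN : volume {y : ℝ | ¬ (y ∈ Set.Ico (0:ℝ) 1 →
      hBeta β₁ y / KBeta β₁ = hBeta β₂ y / KBeta β₂)} = 0 := by
    exact hae2
  -- Step 2: pointwise equality on [0,1)
  have hpt : ∀ x ∈ Set.Ico (0:ℝ) 1, hBeta β₁ x / KBeta β₁ = hBeta β₂ x / KBeta β₂ := by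
    rintro x ⟨hx0, hx1⟩
    have hsel : ∀ k : ℕ, ∃ y, y ∈ Set.Ioo x (min (x + ((k:ℝ)+1)⁻¹) 1) ∧
        (y ∈ Set.Ico (0:ℝ) 1 → hBeta β₁ y / KBeta β₁ = hBeta β₂ y / KBeta β₂) := by
      intro k
      by_contra hc
      push_neg at hc
      have hsub : Set.Ioo x (min (x + ((k:ℝ)+1)⁻¹) 1) ⊆
          {y : ℝ | ¬ (y ∈ Set.Ico (0:ℝ) 1 →
            hBeta β₁ y / KBeta β₁ = hBeta β₂ y / KBeta β₂)} := fun y hy =>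
        _root_.not_imp.mpr (hc y hy)
      have h0 := measure_mono_null hsub hN
      rw [Real.volume_Ioo] at h0
      have hxm : x < min (x + ((k:ℝ)+1)⁻¹) 1 := lt_min (by
        have : (0:ℝ) < ((k:ℝ)+1)⁻¹ := by positivity
        linarith) hx1
      rw [ENNReal.ofReal_eq_zero] at h0
      linarith
    choose u hu₁ hu₂ using hsel
    have hux : ∀ k, x < u k := fun k => (hu₁ k).1
    have hlim : Tendsto u atTop (nhds x) := by
      have hub : ∀ k : ℕ, u k ≤ x + ((k:ℝ)+1)⁻¹ :=
        fun k => le_of_lt (lt_of_lt_of_le (hu₁ k).2 (min_le_left _ _))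
      have h2 : Tendsto (fun k : ℕ => x + ((k:ℝ)+1)⁻¹) atTop (nhds x) := by
        have := tendsto_one_div_add_atTop_nhds_zero_nat (𝕜 := ℝ)
        simp only [one_div] at this
        simpa using tendsto_const_nhds.add this
      exact tendsto_of_tendsto_of_tendsto_of_le_of_le tendsto_const_nhds h2
        (fun k => (hux k).le) hub
    have h1 := (tendsto_hBeta_right hβ₁ hux hlim).div_const (KBeta β₁)
    have h2 := (tendsto_hBeta_right hβ₂ hux hlim).div_const (KBeta β₂)
    have heq : ∀ k, hBeta β₁ (u k) / KBeta β₁ = hBeta β₂ (u k) / KBeta β₂ := fun k =>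
      hu₂ k ⟨le_trans hx0 (hux k).le, lt_of_lt_of_le (hu₁ k).2 (min_le_right _ _)⟩
    exact tendsto_nhds_unique (h1.congr heq) h2
  -- Step 3: jump equality on (0,1)
  have hjump : ∀ y ∈ Set.Ioo (0:ℝ) 1, jump β₁ y / KBeta β₁ = jump β₂ y / KBeta β₂ := by
    rintro y ⟨hy0, hy1⟩
    set u : ℕ → ℝ := fun k => max (y - ((k:ℝ)+1)⁻¹) (y/2) with hu
    have huy : ∀ k, u k < y := by
      intro k
      rw [hu]
      refine max_lt ?_ (by linarith)
      have : (0:ℝ) < ((k:ℝ)+1)⁻¹ := by positivity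
      linarith
    have humem : ∀ k, u k ∈ Set.Ico (0:ℝ) 1 := fun k =>
      ⟨le_trans (by linarith) (le_max_right _ _), lt_trans (huy k) hy1⟩
    have hlim : Tendsto u atTop (nhds y) := by
      have h1 : Tendsto (fun k : ℕ => y - ((k:ℝ)+1)⁻¹) atTop (nhds y) := by
        have := tendsto_one_div_add_atTop_nhds_zero_nat (𝕜 := ℝ)
        simp only [one_div] at this
        simpa using tendsto_const_nhds.sub this
      have h2 := h1.max (tendsto_const_nhds (x := y/2) (f := atTop (α := ℕ)))
      rw [max_eq_left (by linarith : y/2 ≤ y)] at h2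
      exact h2
    have l1 := (tendsto_hBeta_left hβ₁ huy hlim).div_const (KBeta β₁)
    have l2 := (tendsto_hBeta_left hβ₂ huy hlim).div_const (KBeta β₂)
    have heq : ∀ k, hBeta β₁ (u k) / KBeta β₁ = hBeta β₂ (u k) / KBeta β₂ := fun k =>
      hpt (u k) (humem k)
    have hL : hLeft β₁ y / KBeta β₁ = hLeft β₂ y / KBeta β₂ :=
      tendsto_nhds_unique (l1.congr heq) l2
    have hy' := hpt y ⟨hy0.le, hy1⟩
    rw [← hLeft_sub_hBeta hβ₁, ← hLeft_sub_hBeta hβ₂, sub_div, sub_div, hL, hy']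
  -- Step 4: membership criterion
  have hcrit : ∀ (β : ℝ), 1 < β → ∀ y ∈ Set.Ioo (0:ℝ) 1,
      ((∃ n, 1 ≤ n ∧ betaOrb β n = y) ↔ 0 < jump β y) := by
    rintro β hβ y ⟨hy0, hy1⟩
    rw [jump_pos_iff hβ]
    constructor
    · rintro ⟨n, _, hn⟩
      exact ⟨n, hn⟩
    · rintro ⟨n, hn⟩
      refine ⟨n, ?_, hn⟩
      rcases Nat.eq_zero_or_pos n with rfl | h
      · exfalso
        simp only [betaOrb] at hn
        linarith
      · exact h
  have hmemiff : ∀ y ∈ Set.Ioo (0:ℝ) 1,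
      ((∃ n, 1 ≤ n ∧ betaOrb β₁ n = y) ↔ (∃ n, 1 ≤ n ∧ betaOrb β₂ n = y)) := by
    intro y hy
    rw [hcrit β₁ hβ₁ y hy, hcrit β₂ hβ₂ y hy]
    constructor
    · intro h
      have h2 : 0 < jump β₂ y / KBeta β₂ := (hjump y hy) ▸ div_pos h hK₁
      rcases div_pos_iff.mp h2 with ⟨h3, _⟩ | ⟨_, h4⟩
      · exact h3
      · linarith
    · intro h
      have h2 : 0 < jump β₁ y / KBeta β₁ := (hjump y hy).symm ▸ div_pos h hK₂
      rcases div_pos_iff.mp h2 with ⟨h3, _⟩ | ⟨_, h4⟩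
      · exact h3
      · linarith
  -- Step 5: set equality
  have horb_mem : ∀ (β : ℝ), 1 < β → ∀ y, y ∈ {x : ℝ | ∃ n : ℕ, 1 ≤ n ∧ betaOrb β n = x} \ {0} →
      y ∈ Set.Ioo (0:ℝ) 1 := by
    rintro β hβ y ⟨⟨n, hn1, hn⟩, hy0⟩
    simp only [Set.mem_singleton_iff] at hy0
    exact ⟨lt_of_le_of_ne (hn ▸ orb_nonneg n) (Ne.symm hy0), hn ▸ orb_lt_one hn1⟩
  have hSd : {x : ℝ | ∃ n : ℕ, 1 ≤ n ∧ betaOrb β₁ n = x} \ {0} =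
      {x : ℝ | ∃ n : ℕ, 1 ≤ n ∧ betaOrb β₂ n = x} \ {0} := by
    ext y
    constructor
    · intro hy
      have hio := horb_mem β₁ hβ₁ y hy
      exact ⟨(hmemiff y hio).1 hy.1, hy.2⟩
    · intro hy
      have hio := horb_mem β₂ hβ₂ y hy
      exact ⟨(hmemiff y hio).2 hy.1, hy.2⟩
  -- Step 6: finiteness
  have hfin : {x : ℝ | ∃ n : ℕ, 1 ≤ n ∧ betaOrb β₁ n = x}.Finite := by
    by_contra hinf₁'
    have hinf₁ : {x : ℝ | ∃ n : ℕ, 1 ≤ n ∧ betaOrb β₁ n = x}.Infinite := hinf₁'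
    have hinf₂ : {x : ℝ | ∃ n : ℕ, 1 ≤ n ∧ betaOrb β₂ n = x}.Infinite := by
      have h1 : ({x : ℝ | ∃ n : ℕ, 1 ≤ n ∧ betaOrb β₁ n = x} \ {0}).Infinite :=
        hinf₁.diff (Set.finite_singleton 0)
      rw [hSd] at h1
      exact h1.mono Set.diff_subset
    have inj₁ := orb_injective_of_infinite hinf₁
    have inj₂ := orb_injective_of_infinite hinf₂
    have hne0₁ := orb_ne_zero_of_injective inj₁
    have hne0₂ := orb_ne_zero_of_injective inj₂
    have hj₁ : ∀ n : ℕ, jump β₁ (betaOrb β₁ n) = (β₁ ^ n)⁻¹ := by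
      intro n
      rw [jump]
      rw [tsum_eq_single n (fun m hmn => if_neg (fun h => hmn (inj₁ h)))]
      exact if_pos rfl
    have hj₂ : ∀ n : ℕ, jump β₂ (betaOrb β₂ n) = (β₂ ^ n)⁻¹ := by
      intro n
      rw [jump]
      rw [tsum_eq_single n (fun m hmn => if_neg (fun h => hmn (inj₂ h)))]
      exact if_pos rfl
    have horbIoo₁ : ∀ n : ℕ, 1 ≤ n → betaOrb β₁ n ∈ Set.Ioo (0:ℝ) 1 := fun n hn =>
      ⟨lt_of_le_of_ne (orb_nonneg n) (Ne.symm (hne0₁ n)), orb_lt_one hn⟩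
    have horbIoo₂ : ∀ n : ℕ, 1 ≤ n → betaOrb β₂ n ∈ Set.Ioo (0:ℝ) 1 := fun n hn =>
      ⟨lt_of_le_of_ne (orb_nonneg n) (Ne.symm (hne0₂ n)), orb_lt_one hn⟩
    -- the index correspondence
    have key : ∀ n : ℕ, ∃ m, 1 ≤ m ∧ betaOrb β₂ m = betaOrb β₁ (n+1) ∧
        KBeta β₂ * β₂ ^ m = KBeta β₁ * β₁ ^ (n+1) := by
      intro n
      have hy := horbIoo₁ (n+1) (by omega)
      have hmemy : betaOrb β₁ (n+1) ∈ {x : ℝ | ∃ q : ℕ, 1 ≤ q ∧ betaOrb β₂ q = x} := by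
        have := (hmemiff _ hy).1 ⟨n+1, by omega, rfl⟩
        exact this
      obtain ⟨m, hm1, hm2⟩ := hmemy
      refine ⟨m, hm1, hm2, ?_⟩
      have hj := hjump _ hy
      rw [hj₁ (n+1), ← hm2, hj₂ m] at hj
      have hb₁ : (0:ℝ) < β₁ ^ (n+1) := by positivity
      have hb₂ : (0:ℝ) < β₂ ^ m := by positivity
      field_simp at hj
      linarith
    choose m hm1 hm2 hm3 using key
    -- consecutive relation
    have hstep : ∀ n : ℕ, β₂ ^ (m (n+1)) = β₂ ^ (m n) * β₁ := by
      intro n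
      have e1 := hm3 n
      have e2 := hm3 (n+1)
      have : KBeta β₂ * β₂ ^ (m (n+1)) = KBeta β₂ * (β₂ ^ (m n) * β₁) := by
        rw [e2, pow_succ]
        rw [← mul_assoc, ← e1]
        ring
      exact mul_left_cancel₀ hK₂.ne' this
    have hpow_inj : Function.Injective (fun k : ℕ => β₂ ^ k) :=
      (pow_right_strictMono₀ hβ₂).injective
    have hmono : ∀ n : ℕ, m n < m (n+1) := by
      intro n
      have h1 : β₂ ^ (m n) < β₂ ^ (m (n+1)) := by
        rw [hstep n]
        nlinarith [pow_pos (lt_trans one_pos hβ₂) (m n)]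
      exact (pow_lt_pow_iff_right₀ hβ₂).mp h1
    set d := m 1 - m 0 with hd
    have hd1 : 1 ≤ d := by
      have := hmono 0
      simp only [Nat.zero_add] at this
      omega
    have hstep' : ∀ n : ℕ, m (n+1) = m n + d := by
      intro n
      have h1 : β₂ ^ (m (n+1) + m 0) = β₂ ^ (m n + m 1) := by
        rw [pow_add, pow_add, hstep n, hstep 0]
        ring
      have h2 := hpow_inj h1
      have h3 : m 0 < m 1 := by simpa using hmono 0
      omega
    have hform : ∀ n : ℕ, m n = m 0 + n * d := by
      intro n
      induction n with
      | zero => simp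
      | succ k ih => rw [hstep' k, ih]; ring
    have hβ₁d : β₁ = β₂ ^ d := by
      have h1 := hstep 0
      rw [hstep' 0, pow_add] at h1
      have hb : (0:ℝ) < β₂ ^ (m 0) := by positivity
      field_simp at h1
      nlinarith [h1]
    -- surjectivity of m
    have hsurj : ∀ q : ℕ, 1 ≤ q → ∃ n : ℕ, m n = q := by
      intro q hq
      have hyq := horbIoo₂ q hq
      have : betaOrb β₂ q ∈ {x : ℝ | ∃ n : ℕ, 1 ≤ n ∧ betaOrb β₁ n = x} :=
        (hmemiff _ hyq).2 ⟨q, hq, rfl⟩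
      obtain ⟨p, hp1, hp2⟩ := this
      refine ⟨p - 1, ?_⟩
      have hp : p - 1 + 1 = p := by omega
      have := hm2 (p - 1)
      rw [hp, hp2] at this
      exact inj₂ this
    have hm0 : 1 ≤ m 0 := hm1 0
    obtain ⟨n1, hn1⟩ := hsurj 1 le_rfl
    have e1 : m 0 + n1 * d = 1 := by rw [← hform n1, hn1]
    have hm0eq : m 0 = 1 := by
      obtain ⟨t, ht⟩ : ∃ t, n1 * d = t := ⟨_, rfl⟩
      rw [ht] at e1
      omega
    obtain ⟨n2, hn2⟩ := hsurj 2 (by omega)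
    have e2 : m 0 + n2 * d = 2 := by rw [← hform n2, hn2]
    have ht2 : n2 * d = 1 := by
      obtain ⟨t, ht⟩ : ∃ t, n2 * d = t := ⟨_, rfl⟩
      rw [ht] at e2 ⊢
      omega
    have hdeq : d = 1 := Nat.dvd_one.mp ⟨n2, by rw [← ht2]; ring⟩
    rw [hdeq, pow_one] at hβ₁d
    exact hne hβ₁d
  have hfin₂ : {x : ℝ | ∃ n : ℕ, 1 ≤ n ∧ betaOrb β₂ n = x}.Finite := by
    have hsub : {x : ℝ | ∃ n : ℕ, 1 ≤ n ∧ betaOrb β₂ n = x} ⊆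
        ({x : ℝ | ∃ n : ℕ, 1 ≤ n ∧ betaOrb β₁ n = x} \ {0}) ∪ {0} := by
      intro y hy
      by_cases hy0 : y = 0
      · exact Or.inr hy0
      · left
        rw [hSd]
        exact ⟨hy, hy0⟩
    exact Set.Finite.subset (hfin.diff.union (Set.finite_singleton 0)) hsub
  exact ⟨hfin, hfin₂, hSd⟩
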